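/- Let d ≥ 1, let p : (0,∞) × ℝ^d → [0,∞] be measurable, and for a measurable f : ℝ^d → [0,∞] set P_s f(x) = ∫_{ℝ^d} p(s, y - x) f(y) dy. Let W : ℝ^d → [0,∞) be measurable, supported in [-M₀, M₀]^d for some M₀ ∈ ℤ₊, and suppose W is in the Kato class, i.e. lim_{t → 0+} sup_{x ∈ ℝ^d} ∫_0^t P_s W(x) ds = 0. Let q : ℤ^d → [0,∞) be arbitrary and define V(x) = Σ_{i ∈ ℤ^d} q_i W(x - i). Then for every n ∈ ℤ₊, lim_{t → 0+} sup_{x ∈ ℝ^d} ∫_0^t P_s (1_{[-n,n]^d} · V)(x) ds = 0, i.e. V belongs to the local Kato class. -/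

import Mathlib

open MeasureTheory Filter Set Topology ENNReal

/-- If the single-site potential W (nonnegative, supported in
`[-M₀,M₀]^d`) is in the Kato class of the translation-invariant semigroup
`P_s f(x) = ∫ p(s, y-x) f(y) dy`, then for any nonnegative coefficients `q_i`
the alloy-type potential `V(x) = Σ_i q_i W(x-i)` is in the local Kato class:
for every n ∈ ℤ₊, `sup_x ∫_0^t P_s (1_{[-n,n]^d} V)(x) ds → 0` as `t → 0+`. -/
theorem stmt8 (d : ℕ) (hd : 1 ≤ d)
    (p : ℝ → (Fin d → ℝ) → ℝ≥0∞)
    (hp : Measurable (Function.uncurry p))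
    (W : (Fin d → ℝ) → ℝ) (hWmeas : Measurable W) (hWnonneg : ∀ x, 0 ≤ W x)
    (M₀ : ℕ) (hM₀ : 0 < M₀)
    (hWsupp : ∀ x : Fin d → ℝ, ¬ (∀ k, |x k| ≤ (M₀:ℝ)) → W x = 0)
    (hWkato : Tendsto (fun t : ℝ => ⨆ x : Fin d → ℝ,
        ∫⁻ s in Set.Ioc (0:ℝ) t, ∫⁻ y, p s (y - x) * ENNReal.ofReal (W y))
      (nhdsWithin 0 (Set.Ioi 0)) (nhds 0))
    (q : (Fin d → ℤ) → ℝ) (hq : ∀ i, 0 ≤ q i) :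
    ∀ n : ℕ, 0 < n →
      Tendsto (fun t : ℝ => ⨆ x : Fin d → ℝ,
          ∫⁻ s in Set.Ioc (0:ℝ) t, ∫⁻ y, p s (y - x) *
            (Set.indicator {z : Fin d → ℝ | ∀ k, |z k| ≤ (n:ℝ)}
              (fun z => ∑' i : Fin d → ℤ,
                ENNReal.ofReal (q i) * ENNReal.ofReal (W (z - fun k => ((i k : ℤ) : ℝ)))) y))
        (nhdsWithin 0 (Set.Ioi 0)) (nhds 0) := by
  classical
  intro n hn
  set Φ : ℝ → ℝ≥0∞ := fun t => ⨆ x : Fin d → ℝ,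
      ∫⁻ s in Set.Ioc (0:ℝ) t, ∫⁻ y, p s (y - x) * ENNReal.ofReal (W y) with hΦ
  set c : (Fin d → ℤ) → (Fin d → ℝ) := fun i => fun k => ((i k : ℤ) : ℝ) with hc
  set F : Finset (Fin d → ℤ) :=
    Fintype.piFinset fun _ => Finset.Icc (-(n + M₀ : ℤ)) (n + M₀) with hF
  set K : ℝ≥0∞ := ∑ i ∈ F, ENNReal.ofReal (q i) with hK
  have hKne : K ≠ ⊤ := by
    rw [hK]
    exact (ENNReal.sum_lt_top.mpr fun i _ => ENNReal.ofReal_lt_top).ne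
  -- pointwise bound on the indicator
  have hind : ∀ y : Fin d → ℝ, Set.indicator {z : Fin d → ℝ | ∀ k, |z k| ≤ (n:ℝ)}
      (fun z => ∑' i : Fin d → ℤ,
        ENNReal.ofReal (q i) * ENNReal.ofReal (W (z - fun k => ((i k : ℤ) : ℝ)))) y
      ≤ ∑ i ∈ F, ENNReal.ofReal (q i) * ENNReal.ofReal (W (y - c i)) := by
    intro y
    by_cases hy : y ∈ {z : Fin d → ℝ | ∀ k, |z k| ≤ (n:ℝ)}
    · rw [Set.indicator_of_mem hy]
      refine le_of_eq (tsum_eq_sum ?_)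
      intro i hi
      have hk : ∃ k, ¬ ((-(n + M₀ : ℤ)) ≤ i k ∧ i k ≤ (n + M₀ : ℤ)) := by
        by_contra h
        push_neg at h
        exact hi (by
          rw [hF, Fintype.mem_piFinset]
          intro k
          rw [Finset.mem_Icc]
          exact ⟨(h k).1, (h k).2⟩)
      obtain ⟨k, hk⟩ := hk
      have hikZ : (n + M₀ : ℤ) < |i k| := by
        rw [lt_abs]; omega
      have hikR : ((n : ℝ) + (M₀ : ℝ)) < |((i k : ℤ) : ℝ)| := by
        rw [← Int.cast_abs]
        exact_mod_cast hikZ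
      have hW0 : W (y - fun k => ((i k : ℤ) : ℝ)) = 0 := by
        apply hWsupp
        intro h
        have h1 := h k
        have h2 : |y k - ((i k : ℤ) : ℝ)| ≤ (M₀ : ℝ) := by simpa using h1
        have h3 : |y k| ≤ (n : ℝ) := hy k
        have h4 : |((i k : ℤ) : ℝ)| - |y k| ≤ |((i k : ℤ) : ℝ) - y k| :=
          abs_sub_abs_le_abs_sub _ _
        rw [abs_sub_comm] at h4
        linarith
      simp [hW0]
    · rw [Set.indicator_of_notMem hy]
      exact zero_le
  -- measurability helpers
  have hmeasW : ∀ cc : Fin d → ℝ, Measurable fun y : Fin d → ℝ => ENNReal.ofReal (W (y - cc)) :=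
    fun cc => ENNReal.measurable_ofReal.comp (hWmeas.comp (measurable_id.sub measurable_const))
  have hps : ∀ (s : ℝ) (x : Fin d → ℝ), Measurable fun y : Fin d → ℝ => p s (y - x) := by
    intro s x
    have h1 : Measurable (p s) := hp.comp measurable_prodMk_left
    exact h1.comp (measurable_id.sub measurable_const)
  have hsmeas : ∀ x' : Fin d → ℝ, Measurable fun s : ℝ =>
      ∫⁻ y, p s (y - x') * ENNReal.ofReal (W y) := by
    intro x'
    apply Measurable.lintegral_prod_right (f := fun s y => p s (y - x') * ENNReal.ofReal (W y))
    apply Measurable.mul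
    · exact hp.comp (measurable_fst.prodMk (measurable_snd.sub measurable_const))
    · exact (ENNReal.measurable_ofReal.comp hWmeas).comp measurable_snd
  -- main bound
  have hbound : ∀ t : ℝ, (⨆ x : Fin d → ℝ,
      ∫⁻ s in Set.Ioc (0:ℝ) t, ∫⁻ y, p s (y - x) *
        (Set.indicator {z : Fin d → ℝ | ∀ k, |z k| ≤ (n:ℝ)}
          (fun z => ∑' i : Fin d → ℤ,
            ENNReal.ofReal (q i) * ENNReal.ofReal (W (z - fun k => ((i k : ℤ) : ℝ)))) y))
      ≤ K * Φ t := by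
    intro t
    refine iSup_le fun x => ?_
    have step1 : ∀ s : ℝ, (∫⁻ y, p s (y - x) *
        (Set.indicator {z : Fin d → ℝ | ∀ k, |z k| ≤ (n:ℝ)}
          (fun z => ∑' i : Fin d → ℤ,
            ENNReal.ofReal (q i) * ENNReal.ofReal (W (z - fun k => ((i k : ℤ) : ℝ)))) y))
        ≤ ∑ i ∈ F, ENNReal.ofReal (q i) *
            ∫⁻ y, p s (y - (x - c i)) * ENNReal.ofReal (W y) := by
      intro s
      calc (∫⁻ y, p s (y - x) *
          (Set.indicator {z : Fin d → ℝ | ∀ k, |z k| ≤ (n:ℝ)}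
            (fun z => ∑' i : Fin d → ℤ,
              ENNReal.ofReal (q i) * ENNReal.ofReal (W (z - fun k => ((i k : ℤ) : ℝ)))) y))
          ≤ ∫⁻ y, ∑ i ∈ F, ENNReal.ofReal (q i) *
              (p s (y - x) * ENNReal.ofReal (W (y - c i))) := by
            apply lintegral_mono
            intro y
            calc p s (y - x) * _ ≤ p s (y - x) *
                ∑ i ∈ F, ENNReal.ofReal (q i) * ENNReal.ofReal (W (y - c i)) :=
                  mul_le_mul' le_rfl (hind y)
              _ = ∑ i ∈ F, ENNReal.ofReal (q i) *
                  (p s (y - x) * ENNReal.ofReal (W (y - c i))) := by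
                  rw [Finset.mul_sum]
                  exact Finset.sum_congr rfl fun i _ => by ring
        _ = ∑ i ∈ F, ∫⁻ y, ENNReal.ofReal (q i) *
              (p s (y - x) * ENNReal.ofReal (W (y - c i))) := by
            apply lintegral_finset_sum
            intro i _
            exact (measurable_const.mul ((hps s x).mul (hmeasW (c i))))
        _ = ∑ i ∈ F, ENNReal.ofReal (q i) *
              ∫⁻ y, p s (y - (x - c i)) * ENNReal.ofReal (W y) := by
            refine Finset.sum_congr rfl fun i _ => ?_
            rw [lintegral_const_mul (f := fun y => p s (y - x) * ENNReal.ofReal (W (y - c i))) _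
              ((hps s x).mul (hmeasW (c i)))]
            congr 1
            have := lintegral_add_right_eq_self
              (μ := (volume : Measure (Fin d → ℝ)))
              (fun y => p s (y - x) * ENNReal.ofReal (W (y - c i))) (c i)
            rw [← this]
            refine lintegral_congr fun u => ?_
            have h1 : u + c i - x = u - (x - c i) := by abel
            have h2 : u + c i - c i = u := by abel
            rw [h1, h2]
    calc (∫⁻ s in Set.Ioc (0:ℝ) t, ∫⁻ y, p s (y - x) *
        (Set.indicator {z : Fin d → ℝ | ∀ k, |z k| ≤ (n:ℝ)}
          (fun z => ∑' i : Fin d → ℤ,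
            ENNReal.ofReal (q i) * ENNReal.ofReal (W (z - fun k => ((i k : ℤ) : ℝ)))) y))
        ≤ ∫⁻ s in Set.Ioc (0:ℝ) t, ∑ i ∈ F, ENNReal.ofReal (q i) *
            ∫⁻ y, p s (y - (x - c i)) * ENNReal.ofReal (W y) :=
          lintegral_mono step1
      _ = ∑ i ∈ F, ∫⁻ s in Set.Ioc (0:ℝ) t, ENNReal.ofReal (q i) *
            ∫⁻ y, p s (y - (x - c i)) * ENNReal.ofReal (W y) := by
          apply lintegral_finset_sum
          intro i _
          exact measurable_const.mul (hsmeas (x - c i))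
      _ = ∑ i ∈ F, ENNReal.ofReal (q i) *
            ∫⁻ s in Set.Ioc (0:ℝ) t, ∫⁻ y, p s (y - (x - c i)) * ENNReal.ofReal (W y) := by
          refine Finset.sum_congr rfl fun i _ => ?_
          rw [lintegral_const_mul _ (hsmeas (x - c i))]
      _ ≤ ∑ i ∈ F, ENNReal.ofReal (q i) * Φ t := by
          refine Finset.sum_le_sum fun i _ => ?_
          exact mul_le_mul' le_rfl (le_iSup (fun x' : Fin d → ℝ =>
            ∫⁻ s in Set.Ioc (0:ℝ) t, ∫⁻ y, p s (y - x') * ENNReal.ofReal (W y)) (x - c i))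
      _ = K * Φ t := by rw [hK, Finset.sum_mul]
  have h0 : Tendsto (fun t => K * Φ t) (nhdsWithin (0:ℝ) (Set.Ioi 0)) (nhds 0) := by
    have := ENNReal.Tendsto.const_mul hWkato (Or.inr hKne)
    simpa using this
  exact tendsto_of_tendsto_of_tendsto_of_le_of_le tendsto_const_nhds h0
    (fun t => zero_le) hbound
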